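/- Let f ∈ ℂ[x₁,…,x₆] be homogeneous of degree 3 such that the only common zero in ℂ⁶ of its partial derivatives is the origin, let f̂ be the unique symmetric trilinear form on ℂ⁶ with f̂(x,x,x) = f(x), and let W be the polynomial in the 16 variables (Φ₁ ∈ ℂ⁶, Φ₂ ∈ ℂ⁶, a₀,a₁,a₂,a₃ ∈ ℂ) given by W = Σ_{j=0}^{3} aⱼ · f̂(Φ₁,…,Φ₁,Φ₂,…,Φ₂) with 3−j arguments equal to Φ₁ and j arguments equal to Φ₂. Suppose all 16 partial derivatives of W vanish at a point (Φ₁,Φ₂,a), that the binary cubic ψ = Σⱼ aⱼ t₁^{3−j}t₂^{j} has at least two pairwise non-proportional linear factors, and that there is no linear form l = c₁t₁ + c₂t₂ with l² dividing ψ and c₁Φ₁ + c₂Φ₂ = 0. Then Φ₁ = Φ₂ = 0 and ψ factors into three pairwise non-proportional linear forms. (Hence the critical locus of W on X₊ is entirely contained in the open substack X₊° where ψ has distinct roots, and consists of the single point Φ = 0.) -/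

import Mathlib

open MvPolynomial

private lemma li2 (c d : Fin 2 → ℂ) :
    LinearIndependent ℂ ![c, d] ↔ c 0 * d 1 - c 1 * d 0 ≠ 0 := by
  have hcomp : ∀ s t : ℂ, s * c 0 + t * d 0 = 0 → s * c 1 + t * d 1 = 0 →
      s • c + t • d = 0 := by
    intro s t e0 e1
    funext i
    fin_cases i <;>
      simp only [Pi.add_apply, Pi.smul_apply, smul_eq_mul, Pi.zero_apply] <;>
      [exact e0; exact e1]
  rw [LinearIndependent.pair_iff]
  constructor
  · intro h hdet
    obtain ⟨h1, h2⟩ := h (d 1) (-(c 1))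
      (hcomp _ _ (by linear_combination hdet) (by ring))
    have h2' : c 1 = 0 := neg_eq_zero.mp h2
    obtain ⟨h3, h4⟩ := h (d 0) (-(c 0))
      (hcomp _ _ (by ring) (by rw [h1, h2']; ring))
    have h4' : c 0 = 0 := neg_eq_zero.mp h4
    obtain ⟨h5, -⟩ := h 1 0 (hcomp _ _ (by rw [h4']; ring) (by rw [h2']; ring))
    exact one_ne_zero h5
  · intro hdet s t hst
    have h0 := congrFun hst 0
    have h1 := congrFun hst 1
    simp only [Pi.add_apply, Pi.smul_apply, smul_eq_mul, Pi.zero_apply] at h0 h1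
    constructor
    · have hs : s * (c 0 * d 1 - c 1 * d 0) = 0 := by linear_combination d 1 * h0 - d 0 * h1
      rcases mul_eq_zero.mp hs with h | h
      · exact h
      · exact absurd h hdet
    · have ht : t * (c 0 * d 1 - c 1 * d 0) = 0 := by linear_combination (-(c 1)) * h0 + c 0 * h1
      rcases mul_eq_zero.mp ht with h | h
      · exact h
      · exact absurd h hdet

private lemma hasDerivAt_cubic (k0 k1 k2 k3 : ℂ) :
    HasDerivAt (fun s : ℂ => k0 + k1 * s + k2 * s ^ 2 + k3 * s ^ 3) k1 0 := by
  have h0 := hasDerivAt_const (0:ℂ) k0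
  have h1 : HasDerivAt (fun s : ℂ => k1 * s) k1 0 := by
    simpa using (hasDerivAt_id (0:ℂ)).const_mul k1
  have h2 : HasDerivAt (fun s : ℂ => k2 * s ^ 2) 0 0 := by
    simpa using (hasDerivAt_pow 2 (0:ℂ)).const_mul k2
  have h3 : HasDerivAt (fun s : ℂ => k3 * s ^ 3) 0 0 := by
    simpa using (hasDerivAt_pow 3 (0:ℂ)).const_mul k3
  have hsum := ((h0.add h1).add h2).add h3
  simp only [zero_add, add_zero] at hsum
  exact hsum

private lemma hasDerivAt_eval_line {σ : Type} [Fintype σ] [DecidableEq σ]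
    (p : MvPolynomial σ ℂ) (x y : σ → ℂ) :
    HasDerivAt (fun s : ℂ => eval (x + s • y) p)
      (∑ v, y v * eval x (pderiv v p)) 0 := by
  induction p using MvPolynomial.induction_on with
  | C a => simpa using hasDerivAt_const (0:ℂ) a
  | add p q hp hq =>
      have hpq := hp.add hq
      simp only [map_add, mul_add, Finset.sum_add_distrib]
      exact hpq
  | mul_X p i hp =>
      have h2 : HasDerivAt (fun s : ℂ => x i + s * y i) (y i) 0 := by
        simpa using ((hasDerivAt_id (0:ℂ)).mul_const (y i)).const_add (x i)
      have h3 := hp.mul h2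
      have hfun : (fun s : ℂ => eval (x + s • y) (p * X i))
          = fun s : ℂ => eval (x + s • y) p * (x i + s * y i) := by
        funext s
        simp [smul_eq_mul]
      rw [hfun]
      refine h3.congr_deriv ?_
      symm
      have hz : x + (0:ℂ) • y = x := by funext j; simp
      rw [hz]
      simp only [zero_mul, add_zero]
      have hterm : ∀ v : σ, y v * eval x (pderiv v (p * X i))
          = y v * eval x (pderiv v p) * x i + (if i = v then y v * eval x p else 0) := by
        intro v
        rcases eq_or_ne i v with h | h
        · subst h
          simp only [pderiv_mul, pderiv_X_self, map_add, map_mul, eval_X, map_one, if_pos rfl,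
            mul_one]
          simp only [eq_self_iff_true, if_true]
          ring
        · simp only [pderiv_mul, pderiv_X_of_ne h, map_add, map_mul, eval_X,
            map_zero, mul_zero, add_zero, if_neg h]
          ring
      rw [Finset.sum_congr rfl fun v _ => hterm v, Finset.sum_add_distrib,
        Finset.sum_ite_eq Finset.univ i (fun v => y v * eval x p)]
      rw [← Finset.sum_mul]
      simp only [Finset.mem_univ, if_pos]
      ring

/-- **Critical locus of the superpotential on `X₊`.** Let `f` be a homogeneous
cubic in six variables whose partials have no common zero but the origin, `F` its
polarization, and `W = Σⱼ aⱼ F(Φ₁,…,Φ₁,Φ₂,…,Φ₂)`. Suppose all 16 partial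
derivatives of `W` vanish at a point `(Φ₁, Φ₂, a)` which is semistable for the
positive stability condition: the binary cubic `ψ = Σⱼ aⱼ t₁^{3-j}t₂^j` is
nonzero with at least two non-proportional linear factors, and there is no
nonzero linear form `l = c₁t₁ + c₂t₂` with `l² ∣ ψ` and `c₁Φ₁ + c₂Φ₂ = 0`.
Then `Φ₁ = Φ₂ = 0` and `ψ` is a product of three pairwise non-proportional
linear forms. -/
theorem critical_locus_on_X_plus
    (f : MvPolynomial (Fin 6) ℂ) (hf3 : f.IsHomogeneous 3)
    (hsm : ∀ x : Fin 6 → ℂ, (∀ i, eval x (pderiv i f) = 0) → x = 0)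
    (F : (Fin 6 → ℂ) → (Fin 6 → ℂ) → (Fin 6 → ℂ) → ℂ)
    (hF_swap12 : ∀ x y z, F x y z = F y x z)
    (hF_swap23 : ∀ x y z, F x y z = F x z y)
    (hF_add : ∀ x x' y z, F (x + x') y z = F x y z + F x' y z)
    (hF_smul : ∀ (c : ℂ) (x y z : Fin 6 → ℂ), F (c • x) y z = c * F x y z)
    (hF_diag : ∀ x, F x x x = eval x f)
    (W : MvPolynomial ((Fin 6 ⊕ Fin 6) ⊕ Fin 4) ℂ)
    (hW : ∀ (P₁ P₂ : Fin 6 → ℂ) (b : Fin 4 → ℂ),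
      eval (Sum.elim (Sum.elim P₁ P₂) b) W =
        b 0 * F P₁ P₁ P₁ + b 1 * F P₁ P₁ P₂ + b 2 * F P₁ P₂ P₂ + b 3 * F P₂ P₂ P₂)
    (Φ₁ Φ₂ : Fin 6 → ℂ) (a : Fin 4 → ℂ)
    (hcrit : ∀ v, eval (Sum.elim (Sum.elim Φ₁ Φ₂) a) (pderiv v W) = 0)
    (ψ : MvPolynomial (Fin 2) ℂ)
    (hψ : ψ = C (a 0) * X 0 ^ 3 + C (a 1) * X 0 ^ 2 * X 1
      + C (a 2) * X 0 * X 1 ^ 2 + C (a 3) * X 1 ^ 3)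
    (hψne : ψ ≠ 0)
    (htwo : ∃ c d : Fin 2 → ℂ, LinearIndependent ℂ ![c, d] ∧
      (C (c 0) * X 0 + C (c 1) * X 1) ∣ ψ ∧ (C (d 0) * X 0 + C (d 1) * X 1) ∣ ψ)
    (hnodouble : ¬ ∃ c : Fin 2 → ℂ, c ≠ 0 ∧
      (C (c 0) * X 0 + C (c 1) * X 1) ^ 2 ∣ ψ ∧ c 0 • Φ₁ + c 1 • Φ₂ = 0) :
    Φ₁ = 0 ∧ Φ₂ = 0 ∧
      ∃ c d e : Fin 2 → ℂ,
        ψ = (C (c 0) * X 0 + C (c 1) * X 1) * (C (d 0) * X 0 + C (d 1) * X 1)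
          * (C (e 0) * X 0 + C (e 1) * X 1) ∧
        LinearIndependent ℂ ![c, d] ∧ LinearIndependent ℂ ![c, e] ∧
        LinearIndependent ℂ ![d, e] := by
  classical
  -- swap of outer arguments
  have hswap13 : ∀ x y z, F x y z = F z y x := by
    intro x y z
    rw [hF_swap12, hF_swap23, hF_swap12]
  -- linear expansions along a line, slot by slot
  have hlin1 : ∀ (s : ℂ) (u v w z : Fin 6 → ℂ),
      F (u + s • v) w z = F u w z + s * F v w z := by
    intro s u v w z; rw [hF_add, hF_smul]
  have hlin2 : ∀ (s : ℂ) (u v w z : Fin 6 → ℂ),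
      F w (u + s • v) z = F w u z + s * F w v z := by
    intro s u v w z
    calc F w (u + s • v) z = F (u + s • v) w z := hF_swap12 _ _ _
      _ = F u w z + s * F v w z := hlin1 _ _ _ _ _
      _ = F w u z + s * F w v z := by rw [hF_swap12 u w z, hF_swap12 v w z]
  have hlin3 : ∀ (s : ℂ) (u v w z : Fin 6 → ℂ),
      F w z (u + s • v) = F w z u + s * F w z v := by
    intro s u v w z
    calc F w z (u + s • v) = F (u + s • v) z w := hswap13 _ _ _
      _ = F u z w + s * F v z w := hlin1 _ _ _ _ _
      _ = F w z u + s * F w z v := by rw [hswap13 u z w, hswap13 v z w]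
  have hPPw : ∀ (s : ℂ) (u v w : Fin 6 → ℂ), F (u + s • v) (u + s • v) w
      = F u u w + 2 * s * F u v w + s ^ 2 * F v v w := by
    intro s u v w
    rw [hlin1, hlin2, hlin2]
    have h : F v u w = F u v w := hF_swap12 _ _ _
    rw [h]; ring
  have hPPP : ∀ (s : ℂ) (u v : Fin 6 → ℂ), F (u + s • v) (u + s • v) (u + s • v)
      = F u u u + 3 * s * F u u v + 3 * s ^ 2 * F u v v + s ^ 3 * F v v v := by
    intro s u v
    rw [hPPw, hlin3, hlin3, hlin3]
    have e1 : F u v u = F u u v := hF_swap23 _ _ _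
    have e2 : F v v u = F u v v := hswap13 _ _ _
    rw [e1, e2]; ring
  -- the nondegeneracy of f in terms of F
  have hgrad : ∀ x0 : Fin 6 → ℂ, (∀ y0, F x0 x0 y0 = 0) → x0 = 0 := by
    intro x0 hx
    apply hsm
    intro i
    set yi : Fin 6 → ℂ := Pi.single i 1 with hyi
    have hkl := hasDerivAt_eval_line f x0 yi
    have hfun : (fun s : ℂ => eval (x0 + s • yi) f)
        = fun s : ℂ => eval x0 f + (3 * F x0 x0 yi) * s
            + (3 * F x0 yi yi) * s ^ 2 + (F yi yi yi) * s ^ 3 := by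
      funext s
      rw [← hF_diag, ← hF_diag, hPPP]
      ring
    have h2 : HasDerivAt (fun s : ℂ => eval (x0 + s • yi) f) (3 * F x0 x0 yi) 0 := by
      rw [hfun]; exact hasDerivAt_cubic _ _ _ _
    have h3 := hkl.unique h2
    rw [hx] at h3
    have h4 : (∑ v, yi v * eval x0 (pderiv v f)) = eval x0 (pderiv i f) := by
      rw [Finset.sum_eq_single i (fun b _ hb => by
        rw [hyi, Pi.single_eq_of_ne hb, zero_mul]) (by simp)]
      simp [hyi]
    rw [h4] at h3
    simpa using h3
  -- the critical point equations
  have hE1 : ∀ y : Fin 6 → ℂ,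
      3 * a 0 * F Φ₁ Φ₁ y + 2 * a 1 * F Φ₁ Φ₂ y + a 2 * F Φ₂ Φ₂ y = 0 := by
    intro y
    set pt : (Fin 6 ⊕ Fin 6) ⊕ Fin 4 → ℂ := Sum.elim (Sum.elim Φ₁ Φ₂) a with hpt
    set Y : (Fin 6 ⊕ Fin 6) ⊕ Fin 4 → ℂ := Sum.elim (Sum.elim y 0) 0 with hY
    have hplus : ∀ s : ℂ, pt + s • Y = Sum.elim (Sum.elim (Φ₁ + s • y) Φ₂) a := by
      intro s; funext v
      rcases v with (v | v) | v <;>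
        simp [hpt, hY, Pi.add_apply, Pi.smul_apply, smul_eq_mul]
    have hkl := hasDerivAt_eval_line W pt Y
    have hsum0 : (∑ v, Y v * eval pt (pderiv v W)) = 0 :=
      Finset.sum_eq_zero fun v _ => by rw [hcrit v, mul_zero]
    rw [hsum0] at hkl
    have hfun : (fun s : ℂ => eval (pt + s • Y) W) = fun s : ℂ =>
        (a 0 * F Φ₁ Φ₁ Φ₁ + a 1 * F Φ₁ Φ₁ Φ₂ + a 2 * F Φ₁ Φ₂ Φ₂ + a 3 * F Φ₂ Φ₂ Φ₂)
        + (3 * a 0 * F Φ₁ Φ₁ y + 2 * a 1 * F Φ₁ Φ₂ y + a 2 * F Φ₂ Φ₂ y) * s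
        + (3 * a 0 * F Φ₁ y y + a 1 * F y y Φ₂) * s ^ 2
        + (a 0 * F y y y) * s ^ 3 := by
      funext s
      rw [hplus, hW, hPPP, hPPw, hlin1]
      have e1 : F Φ₁ y Φ₂ = F Φ₁ Φ₂ y := hF_swap23 _ _ _
      have e2 : F y Φ₂ Φ₂ = F Φ₂ Φ₂ y := hswap13 _ _ _
      rw [e1, e2]; ring
    have h2 : HasDerivAt (fun s : ℂ => eval (pt + s • Y) W)
        (3 * a 0 * F Φ₁ Φ₁ y + 2 * a 1 * F Φ₁ Φ₂ y + a 2 * F Φ₂ Φ₂ y) 0 := by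
      rw [hfun]; exact hasDerivAt_cubic _ _ _ _
    exact h2.unique hkl
  have hE2 : ∀ y : Fin 6 → ℂ,
      a 1 * F Φ₁ Φ₁ y + 2 * a 2 * F Φ₁ Φ₂ y + 3 * a 3 * F Φ₂ Φ₂ y = 0 := by
    intro y
    set pt : (Fin 6 ⊕ Fin 6) ⊕ Fin 4 → ℂ := Sum.elim (Sum.elim Φ₁ Φ₂) a with hpt
    set Y : (Fin 6 ⊕ Fin 6) ⊕ Fin 4 → ℂ := Sum.elim (Sum.elim 0 y) 0 with hY
    have hplus : ∀ s : ℂ, pt + s • Y = Sum.elim (Sum.elim Φ₁ (Φ₂ + s • y)) a := by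
      intro s; funext v
      rcases v with (v | v) | v <;>
        simp [hpt, hY, Pi.add_apply, Pi.smul_apply, smul_eq_mul]
    have hkl := hasDerivAt_eval_line W pt Y
    have hsum0 : (∑ v, Y v * eval pt (pderiv v W)) = 0 :=
      Finset.sum_eq_zero fun v _ => by rw [hcrit v, mul_zero]
    rw [hsum0] at hkl
    have hfun : (fun s : ℂ => eval (pt + s • Y) W) = fun s : ℂ =>
        (a 0 * F Φ₁ Φ₁ Φ₁ + a 1 * F Φ₁ Φ₁ Φ₂ + a 2 * F Φ₁ Φ₂ Φ₂ + a 3 * F Φ₂ Φ₂ Φ₂)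
        + (a 1 * F Φ₁ Φ₁ y + 2 * a 2 * F Φ₁ Φ₂ y + 3 * a 3 * F Φ₂ Φ₂ y) * s
        + (a 2 * F y y Φ₁ + 3 * a 3 * F Φ₂ y y) * s ^ 2
        + (a 3 * F y y y) * s ^ 3 := by
      funext s
      rw [hplus, hW, hPPP]
      have e0 : F Φ₁ (Φ₂ + s • y) (Φ₂ + s • y) = F (Φ₂ + s • y) (Φ₂ + s • y) Φ₁ :=
        hswap13 _ _ _
      rw [e0, hPPw, hlin3]
      have e1 : F Φ₂ Φ₂ Φ₁ = F Φ₁ Φ₂ Φ₂ := hswap13 _ _ _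
      have e2 : F Φ₂ y Φ₁ = F Φ₁ Φ₂ y := by
        rw [hswap13, hF_swap23]
      have e3 : F Φ₂ y y = F Φ₂ y y := rfl
      rw [e1, e2]; ring
    have h2 : HasDerivAt (fun s : ℂ => eval (pt + s • Y) W)
        (a 1 * F Φ₁ Φ₁ y + 2 * a 2 * F Φ₁ Φ₂ y + 3 * a 3 * F Φ₂ Φ₂ y) 0 := by
      rw [hfun]; exact hasDerivAt_cubic _ _ _ _
    exact h2.unique hkl
  -- expansions of F on two-dimensional combinations
  have hslot1 : ∀ (α β : ℂ) (p q w z : Fin 6 → ℂ),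
      F (α • p + β • q) w z = α * F p w z + β * F q w z := by
    intro α β p q w z; rw [hF_add, hF_smul, hF_smul]
  have hslot2 : ∀ (α β : ℂ) (u p q z : Fin 6 → ℂ),
      F u (α • p + β • q) z = α * F u p z + β * F u q z := by
    intro α β u p q z
    calc F u (α • p + β • q) z = F (α • p + β • q) u z := hF_swap12 _ _ _
      _ = α * F p u z + β * F q u z := hslot1 _ _ _ _ _ _
      _ = α * F u p z + β * F u q z := by rw [hF_swap12 p u z, hF_swap12 q u z]
  have hcomb : ∀ (α β : ℂ) (z : Fin 6 → ℂ),
      F (α • Φ₁ + β • Φ₂) (α • Φ₁ + β • Φ₂) z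
        = α ^ 2 * F Φ₁ Φ₁ z + 2 * α * β * F Φ₁ Φ₂ z + β ^ 2 * F Φ₂ Φ₂ z := by
    intro α β z
    rw [hslot1, hslot2, hslot2]
    have h : F Φ₂ Φ₁ z = F Φ₁ Φ₂ z := hF_swap12 _ _ _
    rw [h]; ring
  -- roots of the Hessian-type quadratic kill the corresponding combination of Φ's
  have hx0 : ∀ α β : ℂ,
      (3 * a 1 * a 3 - a 2 ^ 2) * α ^ 2 + (a 1 * a 2 - 9 * a 0 * a 3) * α * β
        + (3 * a 0 * a 2 - a 1 ^ 2) * β ^ 2 = 0 →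
      (3 * a 1 * a 3 - a 2 ^ 2 ≠ 0 ∨ a 1 * a 2 - 9 * a 0 * a 3 ≠ 0 ∨
        3 * a 0 * a 2 - a 1 ^ 2 ≠ 0) →
      α • Φ₁ + β • Φ₂ = 0 := by
    intro α β hq hABC
    apply hgrad
    intro y
    rw [hcomb]
    have hu := hE1 y
    have hv := hE2 y
    have I1 : (a 1 * a 2 - 9 * a 0 * a 3) * F Φ₁ Φ₁ y
        - 2 * (3 * a 1 * a 3 - a 2 ^ 2) * F Φ₁ Φ₂ y = 0 := by
      linear_combination a 2 * hv - 3 * a 3 * hu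
    have I2 : 2 * (3 * a 0 * a 2 - a 1 ^ 2) * F Φ₁ Φ₂ y
        - (a 1 * a 2 - 9 * a 0 * a 3) * F Φ₂ Φ₂ y = 0 := by
      linear_combination 3 * a 0 * hv - a 1 * hu
    have I3 : 2 * (3 * a 1 * a 3 - a 2 ^ 2) * F Φ₂ Φ₂ y
        - 2 * (3 * a 0 * a 2 - a 1 ^ 2) * F Φ₁ Φ₁ y = 0 := by
      linear_combination 2 * a 1 * hv - 2 * a 2 * hu
    rcases hABC with h | h | h
    · have key : (3 * a 1 * a 3 - a 2 ^ 2) *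
          (α ^ 2 * F Φ₁ Φ₁ y + 2 * α * β * F Φ₁ Φ₂ y + β ^ 2 * F Φ₂ Φ₂ y) = 0 := by
        linear_combination F Φ₁ Φ₁ y * hq - α * β * I1 + (β ^ 2 / 2) * I3
      exact (mul_eq_zero.mp key).resolve_left h
    · have key : (a 1 * a 2 - 9 * a 0 * a 3) *
          (α ^ 2 * F Φ₁ Φ₁ y + 2 * α * β * F Φ₁ Φ₂ y + β ^ 2 * F Φ₂ Φ₂ y) = 0 := by
        linear_combination 2 * F Φ₁ Φ₂ y * hq + α ^ 2 * I1 - β ^ 2 * I2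
      exact (mul_eq_zero.mp key).resolve_left h
    · have key : (3 * a 0 * a 2 - a 1 ^ 2) *
          (α ^ 2 * F Φ₁ Φ₁ y + 2 * α * β * F Φ₁ Φ₂ y + β ^ 2 * F Φ₂ Φ₂ y) = 0 := by
        linear_combination F Φ₂ Φ₂ y * hq - (α ^ 2 / 2) * I3 + α * β * I2
      exact (mul_eq_zero.mp key).resolve_left h
  -- root conditions from linear factors
  have hroot : ∀ c : Fin 2 → ℂ, (C (c 0) * X 0 + C (c 1) * X 1) ∣ ψ →
      a 0 * c 1 ^ 3 - a 1 * c 0 * c 1 ^ 2 + a 2 * c 0 ^ 2 * c 1 - a 3 * c 0 ^ 3 = 0 := by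
    rintro c ⟨g, hg⟩
    have h := congrArg (eval ![c 1, -(c 0)]) hg
    rw [hψ] at h
    simp only [map_add, map_mul, map_pow, eval_C, eval_X, Matrix.cons_val_zero,
      Matrix.cons_val_one, Matrix.head_cons] at h
    linear_combination h
  obtain ⟨c, d, hli, hdvdc, hdvdd⟩ := htwo
  have hδ : c 0 * d 1 - c 1 * d 0 ≠ 0 := (li2 c d).mp hli
  have hRc := hroot c hdvdc
  have hRd := hroot d hdvdd
  -- complete factorization of ψ
  have hfacE : ∃ e : Fin 2 → ℂ,
      ψ = (C (c 0) * X 0 + C (c 1) * X 1) * (C (d 0) * X 0 + C (d 1) * X 1)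
        * (C (e 0) * X 0 + C (e 1) * X 1) := by
    set b1 : ℂ := 3*a 3*c 0*d 0^2 - a 2*c 1*d 0^2 - 2*a 2*c 0*d 0*d 1 + 2*a 1*c 1*d 0*d 1
        + a 1*c 0*d 1^2 - 3*a 0*c 1*d 1^2 with hb1
    set b2 : ℂ := -3*a 3*c 0^2*d 0 + 2*a 2*c 0*c 1*d 0 + a 2*c 0^2*d 1 - a 1*c 1^2*d 0
        - 2*a 1*c 0*c 1*d 1 + 3*a 0*c 1^2*d 1 with hb2
    set E0 : ℂ := b1 * c 0 + b2 * d 0 with hE0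
    set E1 : ℂ := b1 * c 1 + b2 * d 1 with hE1
    set δ3 : ℂ := (c 0 * d 1 - c 1 * d 0)^3 with hδ3def
    have hδ3 : δ3 ≠ 0 := pow_ne_zero _ hδ
    have hfac' : C δ3 * ψ = (C (c 0) * X 0 + C (c 1) * X 1)
        * (C (d 0) * X 0 + C (d 1) * X 1) * (C E0 * X 0 + C E1 * X 1) := by
      apply MvPolynomial.funext
      intro x
      rw [hψ]
      simp only [map_add, map_mul, map_pow, eval_C, eval_X]
      rw [hE0, hE1, hb1, hb2, hδ3def]
      linear_combination (c 0 * x 0 + c 1 * x 1)^3 * hRd - (d 0 * x 0 + d 1 * x 1)^3 * hRc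
    refine ⟨![E0 / δ3, E1 / δ3], ?_⟩
    simp only [Matrix.cons_val_zero, Matrix.cons_val_one, Matrix.head_cons]
    have hle : (C (E0 / δ3) * X 0 + C (E1 / δ3) * X 1 : MvPolynomial (Fin 2) ℂ)
        = C δ3⁻¹ * (C E0 * X 0 + C E1 * X 1) := by
      rw [div_eq_inv_mul, div_eq_inv_mul, map_mul, map_mul]
      ring
    calc ψ = C (δ3⁻¹ * δ3) * ψ := by rw [inv_mul_cancel₀ hδ3, map_one, one_mul]
      _ = C δ3⁻¹ * (C δ3 * ψ) := by rw [map_mul, mul_assoc]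
      _ = C δ3⁻¹ * ((C (c 0) * X 0 + C (c 1) * X 1) * (C (d 0) * X 0 + C (d 1) * X 1)
            * (C E0 * X 0 + C E1 * X 1)) := by rw [hfac']
      _ = (C (c 0) * X 0 + C (c 1) * X 1) * (C (d 0) * X 0 + C (d 1) * X 1)
            * (C δ3⁻¹ * (C E0 * X 0 + C E1 * X 1)) := by ring
      _ = (C (c 0) * X 0 + C (c 1) * X 1) * (C (d 0) * X 0 + C (d 1) * X 1)
            * (C (E0 / δ3) * X 0 + C (E1 / δ3) * X 1) := by rw [← hle]
  obtain ⟨e, hfe⟩ := hfacE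
  have hEval : ∀ s t : ℂ, a 0*s^3 + a 1*s^2*t + a 2*s*t^2 + a 3*t^3
      = (c 0*s + c 1*t) * (d 0*s + d 1*t) * (e 0*s + e 1*t) := by
    intro s t
    have h := congrArg (eval ![s, t]) hfe
    rw [hψ] at h
    simp only [map_add, map_mul, map_pow, eval_C, eval_X, Matrix.cons_val_zero,
      Matrix.cons_val_one, Matrix.head_cons] at h
    linear_combination h
  have ha0 : a 0 = c 0 * d 0 * e 0 := by linear_combination hEval 1 0
  have ha3 : a 3 = c 1 * d 1 * e 1 := by linear_combination hEval 0 1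
  have ha1 : a 1 = c 0*d 0*e 1 + c 0*d 1*e 0 + c 1*d 0*e 0 := by
    linear_combination (1/2) * hEval 1 1 - (1/2) * hEval 1 (-1) - hEval 0 1
  have ha2 : a 2 = c 0*d 1*e 1 + c 1*d 0*e 1 + c 1*d 1*e 0 := by
    linear_combination (1/2) * hEval 1 1 + (1/2) * hEval 1 (-1) - hEval 1 0
  by_cases hce : c 0 * e 1 - c 1 * e 0 = 0
  · exfalso
    have hcne : ¬(c 0 = 0 ∧ c 1 = 0) := by
      rintro ⟨h1, h2⟩; exact hδ (by rw [h1, h2]; ring)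
    have hκ : ∃ κ : ℂ, e 0 = κ * c 0 ∧ e 1 = κ * c 1 := by
      by_cases hc0 : c 0 = 0
      · have hc1 : c 1 ≠ 0 := fun h => hcne ⟨hc0, h⟩
        refine ⟨e 1 / c 1, ?_, by field_simp⟩
        have h0 : c 1 * e 0 = 0 := by linear_combination -hce + e 1 * hc0
        rw [hc0, mul_zero]
        exact (mul_eq_zero.mp h0).resolve_left hc1
      · refine ⟨e 0 / c 0, by field_simp, ?_⟩
        rw [div_mul_eq_mul_div, eq_div_iff hc0]
        linear_combination hce
    obtain ⟨κ, he0, he1⟩ := hκ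
    have hκne : κ ≠ 0 := by
      intro h
      apply hψne
      rw [hfe, he0, he1, h]
      simp
    have hle : (C (e 0) * X 0 + C (e 1) * X 1 : MvPolynomial (Fin 2) ℂ)
        = C κ * (C (c 0) * X 0 + C (c 1) * X 1) := by
      rw [he0, he1, map_mul, map_mul]; ring
    have hsq : (C (c 0) * X 0 + C (c 1) * X 1) ^ 2 ∣ ψ :=
      ⟨C κ * (C (d 0) * X 0 + C (d 1) * X 1), by rw [hfe, hle]; ring⟩
    have hqc : (3*a 1*a 3 - a 2^2) * c 0^2 + (a 1*a 2 - 9*a 0*a 3) * c 0 * c 1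
        + (3*a 0*a 2 - a 1^2) * c 1^2 = 0 := by
      rw [ha0, ha1, ha2, ha3, he0, he1]; ring
    have hm : -(κ^2) * (c 0*d 1 - c 1*d 0)^2 ≠ 0 :=
      mul_ne_zero (neg_ne_zero.mpr (pow_ne_zero _ hκne)) (pow_ne_zero _ hδ)
    have hdisj : (3*a 1*a 3 - a 2^2 ≠ 0 ∨ a 1*a 2 - 9*a 0*a 3 ≠ 0 ∨
        3*a 0*a 2 - a 1^2 ≠ 0) := by
      by_cases hc0 : c 0 = 0
      · left
        have hc1 : c 1 ≠ 0 := fun h => hcne ⟨hc0, h⟩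
        have hval : 3*a 1*a 3 - a 2^2 = -(κ^2) * (c 0*d 1 - c 1*d 0)^2 * c 1^2 := by
          rw [ha1, ha2, ha3, he0, he1]; ring
        rw [hval]
        exact mul_ne_zero hm (pow_ne_zero _ hc1)
      · right; right
        have hval : 3*a 0*a 2 - a 1^2 = -(κ^2) * (c 0*d 1 - c 1*d 0)^2 * c 0^2 := by
          rw [ha0, ha1, ha2, he0, he1]; ring
        rw [hval]
        exact mul_ne_zero hm (pow_ne_zero _ hc0)
    have hx := hx0 (c 0) (c 1) hqc hdisj
    exact hnodouble ⟨c, fun h => hcne ⟨by simpa using congrFun h 0,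
      by simpa using congrFun h 1⟩, hsq, hx⟩
  by_cases hde : d 0 * e 1 - d 1 * e 0 = 0
  · exfalso
    have hdne : ¬(d 0 = 0 ∧ d 1 = 0) := by
      rintro ⟨h1, h2⟩; exact hδ (by rw [h1, h2]; ring)
    have hκ : ∃ κ : ℂ, e 0 = κ * d 0 ∧ e 1 = κ * d 1 := by
      by_cases hd0 : d 0 = 0
      · have hd1 : d 1 ≠ 0 := fun h => hdne ⟨hd0, h⟩
        refine ⟨e 1 / d 1, ?_, by field_simp⟩
        have h0 : d 1 * e 0 = 0 := by linear_combination -hde + e 1 * hd0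
        rw [hd0, mul_zero]
        exact (mul_eq_zero.mp h0).resolve_left hd1
      · refine ⟨e 0 / d 0, by field_simp, ?_⟩
        rw [div_mul_eq_mul_div, eq_div_iff hd0]
        linear_combination hde
    obtain ⟨κ, he0, he1⟩ := hκ
    have hκne : κ ≠ 0 := by
      intro h
      apply hψne
      rw [hfe, he0, he1, h]
      simp
    have hle : (C (e 0) * X 0 + C (e 1) * X 1 : MvPolynomial (Fin 2) ℂ)
        = C κ * (C (d 0) * X 0 + C (d 1) * X 1) := by
      rw [he0, he1, map_mul, map_mul]; ring
    have hsq : (C (d 0) * X 0 + C (d 1) * X 1) ^ 2 ∣ ψ :=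
      ⟨C κ * (C (c 0) * X 0 + C (c 1) * X 1), by rw [hfe, hle]; ring⟩
    have hqd : (3*a 1*a 3 - a 2^2) * d 0^2 + (a 1*a 2 - 9*a 0*a 3) * d 0 * d 1
        + (3*a 0*a 2 - a 1^2) * d 1^2 = 0 := by
      rw [ha0, ha1, ha2, ha3, he0, he1]; ring
    have hm : -(κ^2) * (c 0*d 1 - c 1*d 0)^2 ≠ 0 :=
      mul_ne_zero (neg_ne_zero.mpr (pow_ne_zero _ hκne)) (pow_ne_zero _ hδ)
    have hdisj : (3*a 1*a 3 - a 2^2 ≠ 0 ∨ a 1*a 2 - 9*a 0*a 3 ≠ 0 ∨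
        3*a 0*a 2 - a 1^2 ≠ 0) := by
      by_cases hd0 : d 0 = 0
      · left
        have hd1 : d 1 ≠ 0 := fun h => hdne ⟨hd0, h⟩
        have hval : 3*a 1*a 3 - a 2^2 = -(κ^2) * (c 0*d 1 - c 1*d 0)^2 * d 1^2 := by
          rw [ha1, ha2, ha3, he0, he1]; ring
        rw [hval]
        exact mul_ne_zero hm (pow_ne_zero _ hd1)
      · right; right
        have hval : 3*a 0*a 2 - a 1^2 = -(κ^2) * (c 0*d 1 - c 1*d 0)^2 * d 0^2 := by
          rw [ha0, ha1, ha2, he0, he1]; ring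
        rw [hval]
        exact mul_ne_zero hm (pow_ne_zero _ hd0)
    have hx := hx0 (d 0) (d 1) hqd hdisj
    exact hnodouble ⟨d, fun h => hdne ⟨by simpa using congrFun h 0,
      by simpa using congrFun h 1⟩, hsq, hx⟩
  -- the three factors are pairwise independent; conclude
  have hDne : (c 0*d 1 - c 1*d 0) * ((c 0*e 1 - c 1*e 0) * (d 0*e 1 - d 1*e 0)) ≠ 0 :=
    mul_ne_zero hδ (mul_ne_zero hce hde)
  have hdisc : (a 1*a 2 - 9*a 0*a 3)^2 - 4*(3*a 1*a 3 - a 2^2)*(3*a 0*a 2 - a 1^2)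
      = -3 * ((c 0*d 1 - c 1*d 0) * ((c 0*e 1 - c 1*e 0) * (d 0*e 1 - d 1*e 0)))^2 := by
    rw [ha0, ha1, ha2, ha3]; ring
  have hfin : Φ₁ = 0 ∧ Φ₂ = 0 := by
    by_cases hA0 : 3*a 1*a 3 - a 2^2 = 0
    · have hB0 : a 1*a 2 - 9*a 0*a 3 ≠ 0 := by
        intro h
        apply hDne
        have h0 : (-3 : ℂ) * ((c 0*d 1 - c 1*d 0)
            * ((c 0*e 1 - c 1*e 0) * (d 0*e 1 - d 1*e 0)))^2 = 0 := by
          linear_combination (-1 : ℂ) * hdisc + (a 1*a 2 - 9*a 0*a 3) * h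
            + (-4*(3*a 0*a 2 - a 1^2)) * hA0
        have h1 := (mul_eq_zero.mp h0).resolve_left (by norm_num)
        exact sq_eq_zero_iff.mp h1
      have hx1 := hx0 1 0 (by linear_combination hA0) (Or.inr (Or.inl hB0))
      have hΦ1 : Φ₁ = 0 := by
        funext i
        have h1 := congrFun hx1 i
        simpa using h1
      have hx2 := hx0 (-(3*a 0*a 2 - a 1^2)) (a 1*a 2 - 9*a 0*a 3)
        (by linear_combination (3*a 0*a 2 - a 1^2)^2 * hA0) (Or.inr (Or.inl hB0))
      have hΦ2 : Φ₂ = 0 := by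
        funext i
        have h1 := congrFun hx2 i
        simp only [Pi.add_apply, Pi.smul_apply, smul_eq_mul, Pi.zero_apply, hΦ1] at h1
        simp only [Pi.zero_apply, mul_zero, zero_add] at h1
        have h2 := (mul_eq_zero.mp h1).resolve_left hB0
        simpa using h2
      exact ⟨hΦ1, hΦ2⟩
    · set z : ℂ := Complex.I * ((Real.sqrt 3 : ℝ) : ℂ) *
          ((c 0*d 1 - c 1*d 0) * ((c 0*e 1 - c 1*e 0) * (d 0*e 1 - d 1*e 0))) with hzdef
      have hz : z^2 = -3 * ((c 0*d 1 - c 1*d 0)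
          * ((c 0*e 1 - c 1*e 0) * (d 0*e 1 - d 1*e 0)))^2 := by
        rw [hzdef]
        have h3 : ((Real.sqrt 3 : ℝ) : ℂ)^2 = 3 := by
          rw [← Complex.ofReal_pow, Real.sq_sqrt (by norm_num : (0:ℝ) ≤ 3)]
          norm_num
        rw [mul_pow, mul_pow, Complex.I_sq, h3]; ring
      have hzne : z ≠ 0 := by
        rw [hzdef]
        refine mul_ne_zero (mul_ne_zero Complex.I_ne_zero ?_) hDne
        exact Complex.ofReal_ne_zero.mpr (ne_of_gt (Real.sqrt_pos.mpr (by norm_num)))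
      have hx1 := hx0 (-(a 1*a 2 - 9*a 0*a 3) + z) (2*(3*a 1*a 3 - a 2^2))
        (by linear_combination (3*a 1*a 3 - a 2^2) * hz - (3*a 1*a 3 - a 2^2) * hdisc)
        (Or.inl hA0)
      have hx2 := hx0 (-(a 1*a 2 - 9*a 0*a 3) - z) (2*(3*a 1*a 3 - a 2^2))
        (by linear_combination (3*a 1*a 3 - a 2^2) * hz - (3*a 1*a 3 - a 2^2) * hdisc)
        (Or.inl hA0)
      have hΦ1 : Φ₁ = 0 := by
        funext i
        have h1 := congrFun hx1 i
        have h2 := congrFun hx2 i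
        simp only [Pi.add_apply, Pi.smul_apply, smul_eq_mul, Pi.zero_apply] at h1 h2
        have h3 : 2 * z * Φ₁ i = 0 := by linear_combination h1 - h2
        have h4 := (mul_eq_zero.mp h3).resolve_left
          (mul_ne_zero two_ne_zero hzne)
        simpa using h4
      have hΦ2 : Φ₂ = 0 := by
        funext i
        have h1 := congrFun hx1 i
        simp only [Pi.add_apply, Pi.smul_apply, smul_eq_mul, Pi.zero_apply, hΦ1] at h1
        simp only [Pi.zero_apply, mul_zero, zero_add] at h1
        have h2 := (mul_eq_zero.mp h1).resolve_left
          (mul_ne_zero two_ne_zero hA0)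
        simpa using h2
      exact ⟨hΦ1, hΦ2⟩
  exact ⟨hfin.1, hfin.2, c, d, e, hfe, hli, (li2 c e).mpr hce, (li2 d e).mpr hde⟩
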